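/- Let φ(x) = x² + 1. For every positive integer n, there exists β in the algebraic closure of Q that is periodic under φ with exact period n (i.e. φ^n(β) = β and φ^k(β) ≠ β for 1 ≤ k < n). -/

import Mathlib

noncomputable section Stmt2Aux

open Polynomial Finset

private abbrev K2 : Type := AlgebraicClosure ℚ

private def f2 : K2 → K2 := fun x => x ^ 2 + 1

private def polZ2 : ℕ → Polynomial ℤ
  | 0 => X
  | n + 1 => polZ2 n ^ 2 + 1

private lemma polZ2_monic_deg (n : ℕ) : (polZ2 n).Monic ∧ (polZ2 n).natDegree = 2 ^ n := by
  induction n with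
  | zero => exact ⟨monic_X, natDegree_X⟩
  | succ n ih =>
    obtain ⟨hm, hd⟩ := ih
    have hmsq : (polZ2 n ^ 2).Monic := hm.pow _
    have hdsq : (polZ2 n ^ 2).natDegree = 2 ^ (n + 1) := by
      rw [natDegree_pow, hd]; ring
    have hlt : (1 : Polynomial ℤ).degree < (polZ2 n ^ 2).degree := by
      rw [degree_one, degree_eq_natDegree hmsq.ne_zero, hdsq]
      exact_mod_cast pow_pos (by norm_num : (0:ℕ) < 2) (n + 1)
    exact ⟨hmsq.add_of_left hlt, by
      rw [polZ2, natDegree_add_eq_left_of_degree_lt hlt, hdsq]⟩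

-- the periodic-point polynomial over ℤ, for n ≥ 1
private def PZ2 (n : ℕ) : Polynomial ℤ := polZ2 n - X

private lemma PZ2_monic_deg {n : ℕ} (hn : 1 ≤ n) :
    (PZ2 n).Monic ∧ (PZ2 n).natDegree = 2 ^ n := by
  obtain ⟨hm, hd⟩ := polZ2_monic_deg n
  have hlt : (-X : Polynomial ℤ).degree < (polZ2 n).degree := by
    rw [degree_neg, degree_X, degree_eq_natDegree hm.ne_zero, hd]
    exact_mod_cast Nat.cast_lt.mpr (by
      calc 1 < 2 ^ 1 := by norm_num
      _ ≤ 2 ^ n := Nat.pow_le_pow_right (by norm_num) hn)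
  constructor
  · simpa [PZ2, sub_eq_add_neg] using hm.add_of_left hlt
  · rw [PZ2, sub_eq_add_neg, natDegree_add_eq_left_of_degree_lt hlt, hd]

private lemma aeval_polZ2 (β : K2) (n : ℕ) : aeval β (polZ2 n) = f2^[n] β := by
  induction n with
  | zero => simp [polZ2]
  | succ n ih =>
    rw [polZ2, Function.iterate_succ_apply', map_add, map_pow, ih, map_one]
    rfl

private lemma aeval_derivative_polZ2 (β : K2) (n : ℕ) :
    aeval β (derivative (polZ2 n)) = ∏ k ∈ range n, (2 * f2^[k] β) := by
  induction n with
  | zero => simp [polZ2]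
  | succ n ih =>
    rw [polZ2, derivative_add, derivative_one, add_zero, derivative_pow, map_mul, map_mul,
      ih, prod_range_succ]
    norm_num [aeval_polZ2, map_ofNat]
    ring

-- the polynomial over K2
private def PK2 (n : ℕ) : Polynomial K2 := (PZ2 n).map (algebraMap ℤ K2)

private lemma eval_PK2 (β : K2) (n : ℕ) : (PK2 n).eval β = f2^[n] β - β := by
  rw [PK2, PZ2, eval_map, ← aeval_def, map_sub, aeval_polZ2, aeval_X]

private lemma PK2_monic_deg {n : ℕ} (hn : 1 ≤ n) :
    (PK2 n).Monic ∧ (PK2 n).natDegree = 2 ^ n := by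
  obtain ⟨hm, hd⟩ := PZ2_monic_deg hn
  exact ⟨hm.map _, by rw [PK2, hm.natDegree_map, hd]⟩

private lemma isIntegral_iterate {β : K2} (hβ : IsIntegral ℤ β) (k : ℕ) :
    IsIntegral ℤ (f2^[k] β) := by
  induction k with
  | zero => exact hβ
  | succ k ih =>
    rw [Function.iterate_succ_apply']
    exact ((ih.pow 2).add isIntegral_one)

/-- Key separability input: a root of `PK2 n` cannot also be a root of its derivative. -/
private lemma deriv_ne_zero {n : ℕ} (hn : 1 ≤ n) {β : K2}
    (hroot : (PK2 n).IsRoot β) : ¬ (derivative (PK2 n)).IsRoot β := by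
  intro hd
  -- β is an algebraic integer
  have hβint : IsIntegral ℤ β := by
    obtain ⟨hm, _⟩ := PZ2_monic_deg hn
    refine ⟨PZ2 n, hm, ?_⟩
    have := hroot
    rw [IsRoot, eval_PK2] at this
    rw [← aeval_def]
    rw [PZ2, map_sub, aeval_polZ2, aeval_X, this]
  -- derivative value
  have hder : (derivative (PK2 n)).eval β = (∏ k ∈ range n, (2 * f2^[k] β)) - 1 := by
    rw [PK2, PZ2, derivative_map, map_sub, derivative_X, Polynomial.map_sub, Polynomial.map_one,
      eval_sub, eval_one, eval_map, ← aeval_def, aeval_derivative_polZ2]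
  rw [IsRoot, hder, sub_eq_zero] at hd
  have hprod : (2 : K2) ^ n * ∏ k ∈ range n, f2^[k] β = 1 := by
    rw [← hd, prod_mul_distrib, prod_const, card_range]
  -- the product is an algebraic integer
  have hint : IsIntegral ℤ (∏ k ∈ range n, f2^[k] β) := by
    have : (∏ k ∈ range n, f2^[k] β) ∈ integralClosure ℤ K2 :=
      Subalgebra.prod_mem _ fun k _ => isIntegral_iterate hβint k
    exact this
  have h2 : ((2 : K2) ^ n)⁻¹ = ∏ k ∈ range n, f2^[k] β :=
    inv_eq_of_mul_eq_one_right hprod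
  have hq : (algebraMap ℚ K2) (((2 : ℚ) ^ n)⁻¹) = ((2 : K2) ^ n)⁻¹ := by
    rw [map_inv₀, map_pow]; norm_num
  have hint2 : IsIntegral ℤ (((2 : ℚ) ^ n)⁻¹) := by
    rw [← isIntegral_algebraMap_iff (algebraMap ℚ K2).injective, hq, h2]
    exact hint
  obtain ⟨y, hy⟩ := IsIntegrallyClosed.isIntegral_iff.mp hint2
  have hy' : (y : ℚ) * 2 ^ n = 1 := by
    have hyy : (y : ℚ) = ((2 : ℚ) ^ n)⁻¹ := hy
    rw [hyy]
    field_simp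
  have : (y * 2 ^ n : ℤ) = 1 := by exact_mod_cast hy'
  have h2n : (2 : ℤ) ^ n ∣ 1 := Dvd.intro_left y this
  have := Int.le_of_dvd one_pos h2n
  have : (2 : ℤ) ≤ 2 ^ n := by
    calc (2 : ℤ) = 2 ^ 1 := by ring
    _ ≤ 2 ^ n := pow_le_pow_right₀ (by norm_num) hn
  omega

private lemma roots_nodup [DecidableEq K2] {n : ℕ} (hn : 1 ≤ n) : (PK2 n).roots.Nodup := by
  rw [Multiset.nodup_iff_count_le_one]
  intro β
  rw [count_roots]
  by_contra h
  push_neg at h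
  have := (one_lt_rootMultiplicity_iff_isRoot (PK2_monic_deg hn).1.ne_zero).mp h
  exact deriv_ne_zero hn this.1 this.2

private lemma card_rootSet [DecidableEq K2] {n : ℕ} (hn : 1 ≤ n) :
    (PK2 n).roots.toFinset.card = 2 ^ n := by
  rw [Multiset.toFinset_card_of_nodup (roots_nodup hn)]
  have hs : Multiset.card (PK2 n).roots = (PK2 n).natDegree :=
    splits_iff_card_roots.mp (IsAlgClosed.splits _)
  rw [hs, (PK2_monic_deg hn).2]

private lemma geom_two (k : ℕ) : ∑ i ∈ range k, 2 ^ i = 2 ^ k - 1 := by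
  induction k with
  | zero => simp
  | succ k ih =>
    rw [sum_range_succ, ih, pow_succ]
    have : 1 ≤ 2 ^ k := Nat.one_le_two_pow
    omega

private lemma sum_bound {n : ℕ} (hn : 1 ≤ n) :
    ∑ p ∈ n.primeFactors, 2 ^ (n / p) < 2 ^ n := by
  rcases Nat.eq_or_lt_of_le hn with h1 | h2
  · rw [← h1]; simp
  · -- n ≥ 2
    have hinj : ∀ p ∈ n.primeFactors, ∀ q ∈ n.primeFactors, n / p = n / q → p = q := by
      intro p hp q hq h
      have hpd := Nat.dvd_of_mem_primeFactors hp
      have hqd := Nat.dvd_of_mem_primeFactors hq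
      have hn0 : n ≠ 0 := by omega
      rw [← Nat.div_div_self hpd hn0, h, Nat.div_div_self hqd hn0]
    calc ∑ p ∈ n.primeFactors, 2 ^ (n / p)
        = ∑ d ∈ n.primeFactors.image (n / ·), 2 ^ d := (sum_image hinj).symm
      _ ≤ ∑ d ∈ range (n / 2 + 1), 2 ^ d := by
          apply sum_le_sum_of_subset
          intro d hd
          simp only [mem_image] at hd
          obtain ⟨p, hp, rfl⟩ := hd
          have : 2 ≤ p := (Nat.prime_of_mem_primeFactors hp).two_le
          exact mem_range.mpr (Nat.lt_succ_of_le (Nat.div_le_div_left this (by norm_num)))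
      _ = 2 ^ (n / 2 + 1) - 1 := geom_two _
      _ < 2 ^ n := by
          have : n / 2 + 1 ≤ n := by omega
          have := Nat.pow_le_pow_right (show 1 ≤ 2 by norm_num) this
          have : 1 ≤ 2 ^ (n / 2 + 1) := Nat.one_le_two_pow
          omega

end Stmt2Aux

/-- For `φ(x) = x² + 1` and every positive integer `n`, there exists `β` in the
algebraic closure of `ℚ` that is periodic under `φ` with exact period `n`. -/
theorem stmt_2 (n : ℕ) (hn : 1 ≤ n) :
    ∃ β : AlgebraicClosure ℚ,
      (fun x : AlgebraicClosure ℚ => x ^ 2 + 1)^[n] β = β ∧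
      ∀ k, 1 ≤ k → k < n → (fun x : AlgebraicClosure ℚ => x ^ 2 + 1)^[k] β ≠ β := by
  classical
  open Polynomial Finset in
  set T : Finset K2 := (PK2 n).roots.toFinset with hT
  set B : Finset K2 := n.primeFactors.biUnion (fun p => (PK2 (n / p)).roots.toFinset) with hB
  have hcardT : T.card = 2 ^ n := card_rootSet hn
  have hcardB : B.card < 2 ^ n := by
    calc B.card ≤ ∑ p ∈ n.primeFactors, ((PK2 (n / p)).roots.toFinset).card :=
          Finset.card_biUnion_le
      _ ≤ ∑ p ∈ n.primeFactors, 2 ^ (n / p) := by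
          apply Finset.sum_le_sum
          intro p hp
          have hp' := Nat.prime_of_mem_primeFactors hp
          have hpd := Nat.dvd_of_mem_primeFactors hp
          have h1 : 1 ≤ n / p := Nat.one_le_div_iff hp'.pos |>.mpr (Nat.le_of_dvd (by omega) hpd)
          calc ((PK2 (n / p)).roots.toFinset).card ≤ Multiset.card (PK2 (n / p)).roots :=
                Multiset.toFinset_card_le _
            _ ≤ (PK2 (n / p)).natDegree := (PK2 (n / p)).card_roots'
            _ = 2 ^ (n / p) := (PK2_monic_deg h1).2
      _ < 2 ^ n := sum_bound hn
  have hnsub : ¬ T ⊆ B := fun h => by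
    have := Finset.card_le_card h
    omega
  obtain ⟨β, hβT, hβB⟩ := Finset.not_subset.mp hnsub
  refine ⟨β, ?_, ?_⟩
  · have h0 := (Polynomial.mem_roots (PK2_monic_deg hn).1.ne_zero).mp (Multiset.mem_toFinset.mp hβT)
    rw [Polynomial.IsRoot, eval_PK2, sub_eq_zero] at h0
    exact h0
  · intro k hk1 hkn hkfix
    have hnfix : f2^[n] β = β := by
      have h0 := (Polynomial.mem_roots (PK2_monic_deg hn).1.ne_zero).mp (Multiset.mem_toFinset.mp hβT)
      rw [Polynomial.IsRoot, eval_PK2, sub_eq_zero] at h0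
      exact h0
    -- gcd argument
    have hpn : Function.IsPeriodicPt f2 n β := hnfix
    have hpk : Function.IsPeriodicPt f2 k β := hkfix
    have hg : Function.IsPeriodicPt f2 (Nat.gcd n k) β := hpn.gcd hpk
    set g := Nat.gcd n k with hgdef
    have hgdvd : g ∣ n := Nat.gcd_dvd_left n k
    have hgpos : 0 < g := Nat.gcd_pos_of_pos_left k (by omega)
    have hglt : g < n := lt_of_le_of_lt (Nat.gcd_le_right (n := k) n (by omega)) hkn
    -- choose a prime p dividing n / g
    have hng2 : 2 ≤ n / g := by
      have h1 : n / g ∣ n := Nat.div_dvd_of_dvd hgdvd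
      have : n / g ≠ 1 := by
        intro h
        have := Nat.div_mul_cancel hgdvd
        rw [h, one_mul] at this
        omega
      have : 1 ≤ n / g := Nat.one_le_div_iff (by omega) |>.mpr (Nat.le_of_dvd (by omega) hgdvd)
      omega
    set p := (n / g).minFac with hpdef
    have hpprime : p.Prime := Nat.minFac_prime (by omega)
    have hpdvd : p ∣ n / g := Nat.minFac_dvd _
    have hpmem : p ∈ n.primeFactors :=
      Nat.mem_primeFactors.mpr ⟨hpprime, hpdvd.trans (Nat.div_dvd_of_dvd hgdvd), by omega⟩
    -- g ∣ n / p
    obtain ⟨m, hm⟩ := hpdvd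
    have hnm : n = g * (p * m) := by rw [← hm, Nat.mul_div_cancel' hgdvd]
    have hnp : n / p = g * m := by
      rw [hnm]
      rw [show g * (p * m) = (g * m) * p by ring]
      exact Nat.mul_div_cancel _ hpprime.pos
    -- β is periodic with period n / p
    have hfix : f2^[n / p] β = β := by
      have : Function.IsPeriodicPt f2 (g * m) β := hg.mul_const m
      rw [hnp]
      exact this
    -- hence β ∈ B, contradiction
    apply hβB
    rw [hB]
    apply Finset.mem_biUnion.mpr
    refine ⟨p, hpmem, ?_⟩
    have h1 : 1 ≤ n / p := by
      rw [hnp]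
      have : 1 ≤ m := by
        rcases Nat.eq_zero_or_pos m with h | h
        · rw [h, mul_zero] at hm; omega
        · omega
      exact Nat.one_le_iff_ne_zero.mpr (by positivity)
    apply Multiset.mem_toFinset.mpr
    apply (Polynomial.mem_roots (PK2_monic_deg h1).1.ne_zero).mpr
    rw [Polynomial.IsRoot, eval_PK2, hfix, sub_self]
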